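/- For every real α, every n ≥ 1, and every x ∈ (0,1), Σ_{k=0}^{n} (α − T_{n,k}(x)/n)²·P_{n,k}(x) = α² + 2 − 2/n. -/
import Mathlib


/-- Bernstein basis polynomial `P_{n,k}(x) = C(n,k) x^k (1-x)^{n-k}`. -/
noncomputable def bern (n k : ℕ) (x : ℝ) : ℝ :=
  (n.choose k : ℝ) * x ^ k * (1 - x) ^ (n - k)

/-- `T_{n,k}(x) = k(k-1)(1-x)/x - 2k(n-k) + (n-k)(n-k-1)x/(1-x)`. -/
noncomputable def T (n k : ℕ) (x : ℝ) : ℝ :=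
  (k : ℝ) * ((k : ℝ) - 1) * (1 - x) / x - 2 * (k : ℝ) * ((n : ℝ) - (k : ℝ))
    + ((n : ℝ) - (k : ℝ)) * ((n : ℝ) - (k : ℝ) - 1) * x / (1 - x)

open Finset

lemma bern_succ_succ (n j : ℕ) (x : ℝ) :
    ((j:ℝ)+1) * bern (n+1) (j+1) x = ((n:ℝ)+1) * x * bern n j x := by
  unfold bern
  have h : ((n+1) * (n.choose j) : ℕ) = (n+1).choose (j+1) * (j+1) :=
    Nat.add_one_mul_choose_eq n j
  have h' : ((n:ℝ)+1) * (n.choose j : ℝ) = ((n+1).choose (j+1) : ℝ) * ((j:ℝ)+1) := by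
    exact_mod_cast congrArg (Nat.cast (R := ℝ)) h
  rw [show (n+1) - (j+1) = n - j from by omega, pow_succ]
  linear_combination (x ^ j * x * (1-x)^(n-j)) * h'.symm

lemma bern_shift (n : ℕ) (x : ℝ) (g : ℕ → ℝ) :
    ∑ k ∈ range (n+2), (k:ℝ) * g k * bern (n+1) k x
      = ((n:ℝ)+1) * x * ∑ j ∈ range (n+1), g (j+1) * bern n j x := by
  rw [Finset.sum_range_succ', Finset.mul_sum]
  simp only [Nat.cast_zero, zero_mul, add_zero]
  refine Finset.sum_congr rfl fun j _ => ?_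
  have h := bern_succ_succ n j x
  push_cast
  linear_combination g (j+1) * h

lemma bern_sum (n : ℕ) (x : ℝ) : ∑ k ∈ range (n+1), bern n k x = 1 := by
  have h := add_pow x (1-x) n
  simp only [add_sub_cancel, one_pow] at h
  rw [show ∑ k ∈ range (n+1), bern n k x
      = ∑ m ∈ range (n+1), x^m * (1-x)^(n-m) * (n.choose m : ℝ) from
    Finset.sum_congr rfl fun k _ => by unfold bern; ring]
  exact h.symm

lemma bern_sum1 (n : ℕ) (x : ℝ) :
    ∑ k ∈ range (n+1), (k:ℝ) * bern n k x = (n:ℝ) * x := by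
  cases n with
  | zero => simp
  | succ m =>
    have h := bern_shift m x (fun _ => 1)
    simp only [mul_one, one_mul] at h
    rw [h, bern_sum]
    push_cast; ring

lemma bern_sum2 (n : ℕ) (x : ℝ) :
    ∑ k ∈ range (n+1), (k:ℝ) * ((k:ℝ)-1) * bern n k x
      = (n:ℝ) * ((n:ℝ)-1) * x^2 := by
  cases n with
  | zero => simp
  | succ m =>
    have h := bern_shift m x (fun k => (k:ℝ) - 1)
    push_cast at h
    rw [show ∑ k ∈ range (m+1+1), (k:ℝ) * ((k:ℝ)-1) * bern (m+1) k x
        = ∑ k ∈ range (m+1+1), (k:ℝ) * ((k:ℝ)-1) * bern (m+1) k x from rfl]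
    rw [show (m+1+1) = m+2 from rfl] at *
    rw [h, show ∑ j ∈ range (m+1), ((j:ℝ)+1-1) * bern m j x
        = ∑ j ∈ range (m+1), (j:ℝ) * bern m j x from
      Finset.sum_congr rfl fun j _ => by ring_nf, bern_sum1]
    push_cast; ring

lemma bern_sum3 (n : ℕ) (x : ℝ) :
    ∑ k ∈ range (n+1), (k:ℝ) * ((k:ℝ)-1) * ((k:ℝ)-2) * bern n k x
      = (n:ℝ) * ((n:ℝ)-1) * ((n:ℝ)-2) * x^3 := by
  cases n with
  | zero => simp
  | succ m =>
    have h := bern_shift m x (fun k => ((k:ℝ) - 1) * ((k:ℝ) - 2))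
    push_cast at h
    rw [show ∑ k ∈ range (m+1+1), (k:ℝ) * ((k:ℝ)-1) * ((k:ℝ)-2) * bern (m+1) k x
        = ∑ k ∈ range (m+2), (k:ℝ) * (((k:ℝ)-1) * ((k:ℝ)-2)) * bern (m+1) k x from
      Finset.sum_congr rfl fun k _ => by ring]
    rw [h, show ∑ j ∈ range (m+1), ((j:ℝ)+1-1) * ((j:ℝ)+1-2) * bern m j x
        = ∑ j ∈ range (m+1), (j:ℝ) * ((j:ℝ)-1) * bern m j x from
      Finset.sum_congr rfl fun j _ => by ring_nf, bern_sum2]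
    push_cast; ring

lemma bern_sum4 (n : ℕ) (x : ℝ) :
    ∑ k ∈ range (n+1), (k:ℝ) * ((k:ℝ)-1) * ((k:ℝ)-2) * ((k:ℝ)-3) * bern n k x
      = (n:ℝ) * ((n:ℝ)-1) * ((n:ℝ)-2) * ((n:ℝ)-3) * x^4 := by
  cases n with
  | zero => simp
  | succ m =>
    have h := bern_shift m x (fun k => ((k:ℝ) - 1) * ((k:ℝ) - 2) * ((k:ℝ) - 3))
    push_cast at h
    rw [show ∑ k ∈ range (m+1+1), (k:ℝ) * ((k:ℝ)-1) * ((k:ℝ)-2) * ((k:ℝ)-3) * bern (m+1) k x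
        = ∑ k ∈ range (m+2), (k:ℝ) * (((k:ℝ)-1) * ((k:ℝ)-2) * ((k:ℝ)-3)) * bern (m+1) k x from
      Finset.sum_congr rfl fun k _ => by ring]
    rw [h, show ∑ j ∈ range (m+1), ((j:ℝ)+1-1) * ((j:ℝ)+1-2) * ((j:ℝ)+1-3) * bern m j x
        = ∑ j ∈ range (m+1), (j:ℝ) * ((j:ℝ)-1) * ((j:ℝ)-2) * bern m j x from
      Finset.sum_congr rfl fun j _ => by ring_nf, bern_sum3]
    push_cast; ring

theorem Phi_identity (α : ℝ) (n : ℕ) (hn : 1 ≤ n) (x : ℝ)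
    (hx : x ∈ Set.Ioo (0:ℝ) 1) :
    ∑ k ∈ Finset.range (n + 1), (α - T n k x / n) ^ 2 * bern n k x
      = α ^ 2 + 2 - 2 / n := by
  obtain ⟨hx0, hx1⟩ := hx
  have hxne : x ≠ 0 := ne_of_gt hx0
  have h1x : (1:ℝ) - x ≠ 0 := by intro h; nlinarith [h]
  have hnne : (n:ℝ) ≠ 0 := Nat.cast_ne_zero.mpr (by omega)
  have key : ∀ k : ℕ, (α - T n k x / n) ^ 2 =
      (((n:ℝ)^2*x^4 + (-2)*(n:ℝ)^3*x^4 + (n:ℝ)^4*x^4 + 2*α*(n:ℝ)^2*x^3 + (-2)*α*(n:ℝ)^2*x^4 + (-2)*α*(n:ℝ)^3*x^3 + 2*α*(n:ℝ)^3*x^4 + α^2*(n:ℝ)^2*x^2 + (-2)*α^2*(n:ℝ)^2*x^3 + α^2*(n:ℝ)^2*x^4) / (((n:ℝ)*x*(1-x))^2)) + ((4*x^2 + (-8)*(n:ℝ)*x^2 + (-4)*(n:ℝ)*x^3 + 4*(n:ℝ)^2*x^2 + 8*(n:ℝ)^2*x^3 + (-4)*(n:ℝ)^3*x^3 + (-4)*α*(n:ℝ)*x^2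 + 4*α*(n:ℝ)*x^3 + 4*α*(n:ℝ)^2*x^2 + (-4)*α*(n:ℝ)^2*x^3) / (((n:ℝ)*x*(1-x))^2)) * (k:ℝ) + ((2 + 8*x + 4*x^2 + (-8)*(n:ℝ)*x + (-10)*(n:ℝ)*x^2 + 6*(n:ℝ)^2*x^2 + (-2)*α*(n:ℝ)*x + 2*α*(n:ℝ)*x^2) / (((n:ℝ)*x*(1-x))^2)) * ((k:ℝ)*((k:ℝ)-1))
        + ((4 + 4*x + (-4)*(n:ℝ)*x) / (((n:ℝ)*x*(1-x))^2)) * ((k:ℝ)*((k:ℝ)-1)*((k:ℝ)-2))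
        + ((1) / (((n:ℝ)*x*(1-x))^2)) * ((k:ℝ)*((k:ℝ)-1)*((k:ℝ)-2)*((k:ℝ)-3)) := by
    intro k
    unfold T
    field_simp
    ring
  have step : ∑ k ∈ Finset.range (n + 1), (α - T n k x / n) ^ 2 * bern n k x
      = (((n:ℝ)^2*x^4 + (-2)*(n:ℝ)^3*x^4 + (n:ℝ)^4*x^4 + 2*α*(n:ℝ)^2*x^3 + (-2)*α*(n:ℝ)^2*x^4 + (-2)*α*(n:ℝ)^3*x^3 + 2*α*(n:ℝ)^3*x^4 + α^2*(n:ℝ)^2*x^2 + (-2)*α^2*(n:ℝ)^2*x^3 + α^2*(n:ℝ)^2*x^4) / (((n:ℝ)*x*(1-x))^2)) * (∑ k ∈ range (n+1), bern n k x)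
        + ((4*x^2 + (-8)*(n:ℝ)*x^2 + (-4)*(n:ℝ)*x^3 + 4*(n:ℝ)^2*x^2 + 8*(n:ℝ)^2*x^3 + (-4)*(n:ℝ)^3*x^3 + (-4)*α*(n:ℝ)*x^2 + 4*α*(n:ℝ)*x^3 + 4*α*(n:ℝ)^2*x^2 + (-4)*α*(n:ℝ)^2*x^3) / (((n:ℝ)*x*(1-x))^2)) * (∑ k ∈ range (n+1), (k:ℝ) * bern n k x)
        + ((2 + 8*x + 4*x^2 + (-8)*(n:ℝ)*x + (-10)*(n:ℝ)*x^2 + 6*(n:ℝ)^2*x^2 + (-2)*α*(n:ℝ)*x + 2*α*(n:ℝ)*x^2) / (((n:ℝ)*x*(1-x))^2)) * (∑ k ∈ range (n+1), (k:ℝ)*((k:ℝ)-1) * bern n k x)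
        + ((4 + 4*x + (-4)*(n:ℝ)*x) / (((n:ℝ)*x*(1-x))^2)) * (∑ k ∈ range (n+1), (k:ℝ)*((k:ℝ)-1)*((k:ℝ)-2) * bern n k x)
        + ((1) / (((n:ℝ)*x*(1-x))^2)) * (∑ k ∈ range (n+1), (k:ℝ)*((k:ℝ)-1)*((k:ℝ)-2)*((k:ℝ)-3) * bern n k x) := by
    rw [Finset.mul_sum, Finset.mul_sum, Finset.mul_sum, Finset.mul_sum, Finset.mul_sum,
      ← Finset.sum_add_distrib, ← Finset.sum_add_distrib, ← Finset.sum_add_distrib,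
      ← Finset.sum_add_distrib]
    refine Finset.sum_congr rfl fun k _ => ?_
    rw [key k]; ring
  rw [step, bern_sum, bern_sum1, bern_sum2, bern_sum3, bern_sum4]
  field_simp
  ring
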